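/- The function ρ̃(x) = (1 + |x|^a)^{−1} on ℝ^d with a > d is an admissible weight: it is strictly positive, bounded, continuous, integrable, and for each T > 0 there is C(T) with (p(t,·)*ρ̃)(x) ≤ C(T) ρ̃(x) for all t ∈ [0,T], x ∈ ℝ^d. -/

import Mathlib

open MeasureTheory Set Filter

lemma aux_rpow_le_exp (c : ℝ) (hc : 0 ≤ c) (u : ℝ) (hu : 0 ≤ u) :
    u ^ c ≤ (Nat.ceil c).factorial * Real.exp u := by
  set n := Nat.ceil c with hn
  have hfac : (1:ℝ) ≤ n.factorial := by
    exact_mod_cast Nat.one_le_iff_ne_zero.2 (Nat.factorial_ne_zero n)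
  rcases le_or_gt u 1 with h1 | h1
  · have h : u ^ c ≤ 1 := Real.rpow_le_one hu h1 hc
    nlinarith [Real.one_le_exp hu]
  · have h2 : u ^ c ≤ u ^ (n:ℝ) :=
      Real.rpow_le_rpow_of_exponent_le h1.le (Nat.le_ceil c)
    rw [Real.rpow_natCast] at h2
    have h3 : u ^ n / n.factorial ≤ Real.exp u := Real.pow_div_factorial_le_exp u hu n
    have hfpos : (0:ℝ) < n.factorial := by positivity
    calc u ^ c ≤ u ^ n := h2
      _ ≤ n.factorial * Real.exp u := by rw [div_le_iff₀ hfpos] at h3; linarith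

lemma aux_moment (a t s : ℝ) (ha : 0 ≤ a) (ht : 0 < t) (hs : 0 ≤ s) :
    s ^ a * Real.exp (-s ^ 2 / (2 * t)) ≤
      (Nat.ceil (a / 2)).factorial * (4 * t) ^ (a / 2) * Real.exp (-s ^ 2 / (4 * t)) := by
  set u := s ^ 2 / (4 * t) with hu
  have hu0 : 0 ≤ u := by positivity
  have hs2 : s ^ 2 = 4 * t * u := by rw [hu]; field_simp
  have hsa : s ^ a = (4 * t) ^ (a / 2) * u ^ (a / 2) := by
    have h : s ^ a = (s ^ 2) ^ (a / 2) := by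
      rw [← Real.rpow_natCast s 2, ← Real.rpow_mul hs]; ring_nf
    rw [h, hs2, Real.mul_rpow (by positivity) hu0]
  have hexp : Real.exp (-s ^ 2 / (2 * t)) = Real.exp (-u) * Real.exp (-s ^ 2 / (4 * t)) := by
    rw [← Real.exp_add]; congr 1; rw [hu]; field_simp; ring
  have key : u ^ (a / 2) ≤ (Nat.ceil (a / 2)).factorial * Real.exp u :=
    aux_rpow_le_exp _ (by linarith) u hu0
  have key2 : u ^ (a / 2) * Real.exp (-u) ≤ (Nat.ceil (a / 2)).factorial := by
    have h := mul_le_mul_of_nonneg_right key (Real.exp_nonneg (-u))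
    rwa [mul_assoc, ← Real.exp_add, add_neg_cancel, Real.exp_zero, mul_one] at h
  calc s ^ a * Real.exp (-s ^ 2 / (2 * t))
      = (4 * t) ^ (a / 2) * (u ^ (a / 2) * Real.exp (-u)) * Real.exp (-s ^ 2 / (4 * t)) := by
        rw [hsa, hexp]; ring
    _ ≤ (4 * t) ^ (a / 2) * (Nat.ceil (a / 2)).factorial * Real.exp (-s ^ 2 / (4 * t)) := by
        have h1 : (0:ℝ) ≤ (4 * t) ^ (a / 2) := by positivity
        have h2 : (0:ℝ) ≤ Real.exp (-s ^ 2 / (4 * t)) := Real.exp_nonneg _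
        nlinarith [mul_le_mul_of_nonneg_left key2 h1]
    _ = (Nat.ceil (a / 2)).factorial * (4 * t) ^ (a / 2) * Real.exp (-s ^ 2 / (4 * t)) := by ring

lemma aux_gauss_integrable (d : ℕ) (b : ℝ) (hb : 0 < b) :
    Integrable (fun v : EuclideanSpace ℝ (Fin d) => Real.exp (-(b * ‖v‖ ^ 2))) := by
  have h := (GaussianFourier.integrable_cexp_neg_mul_sq_norm_add
    (V := EuclideanSpace ℝ (Fin d)) (b := (b : ℂ)) (by simpa using hb) 0 0).norm
  refine h.congr (Eventually.of_forall fun v => ?_)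
  show ‖Complex.exp _‖ = _
  rw [Complex.norm_exp]
  congr 1
  simp only [Complex.add_re, Complex.neg_re, Complex.mul_re, zero_mul,
    Complex.ofReal_re, Complex.ofReal_im, Complex.zero_re, add_zero, ← Complex.ofReal_pow]
  simp

lemma aux_sum_rpow (a x y : ℝ) (ha : 0 ≤ a) (hx : 0 ≤ x) (hy : 0 ≤ y) :
    (x + y) ^ a ≤ 2 ^ a * (x ^ a + y ^ a) := by
  have hmax : x + y ≤ 2 * max x y := by
    rcases max_cases x y with ⟨h, h2⟩ | ⟨h, h2⟩ <;> rw [h] <;> linarith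
  have h1 : (x + y) ^ a ≤ (2 * max x y) ^ a :=
    Real.rpow_le_rpow (by linarith) hmax ha
  have h2 : (2 * max x y) ^ a = 2 ^ a * (max x y) ^ a :=
    Real.mul_rpow (by norm_num) (le_max_of_le_left hx)
  have h3 : (max x y) ^ a ≤ x ^ a + y ^ a := by
    rcases max_cases x y with ⟨h, _⟩ | ⟨h, _⟩ <;> rw [h]
    · nlinarith [Real.rpow_nonneg hy a]
    · nlinarith [Real.rpow_nonneg hx a]
  have h4 : (0:ℝ) ≤ 2 ^ a := Real.rpow_nonneg (by norm_num) a
  calc (x + y) ^ a ≤ 2 ^ a * (max x y) ^ a := by rw [← h2]; exact h1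
    _ ≤ 2 ^ a * (x ^ a + y ^ a) := mul_le_mul_of_nonneg_left h3 h4

lemma aux_one_le_two_rpow (a : ℝ) (ha : 0 ≤ a) : (1:ℝ) ≤ 2 ^ a := by
  calc (1:ℝ) = 2 ^ (0:ℝ) := by rw [Real.rpow_zero]
    _ ≤ 2 ^ a := Real.rpow_le_rpow_of_exponent_le (by norm_num) ha

lemma aux_peetre (a r q s : ℝ) (ha : 0 ≤ a) (hr : 0 ≤ r) (hq : 0 ≤ q) (hs : 0 ≤ s)
    (h : s ≤ r + q) : 1 + s ^ a ≤ 2 ^ a * (1 + r ^ a) * (1 + q ^ a) := by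
  have h1 : s ^ a ≤ (r + q) ^ a := Real.rpow_le_rpow hs h ha
  have h2 : (r + q) ^ a ≤ 2 ^ a * (r ^ a + q ^ a) := aux_sum_rpow a r q ha hr hq
  have h3 : (1:ℝ) ≤ 2 ^ a := aux_one_le_two_rpow a ha
  have h4 : (0:ℝ) ≤ r ^ a := Real.rpow_nonneg hr a
  have h5 : (0:ℝ) ≤ q ^ a := Real.rpow_nonneg hq a
  nlinarith [mul_nonneg h4 h5]

lemma aux_ptwise (a t A r q s : ℝ) (ha0 : 0 < a) (ht0 : 0 < t) (hA : 0 ≤ A)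
    (hr : 0 ≤ r) (hq : 0 ≤ q) (hs : 0 ≤ s) (htri : s ≤ r + q) :
    A * Real.exp (-r ^ 2 / (2 * t)) * (1 + q ^ a)⁻¹ ≤
      (1 + s ^ a)⁻¹ *
        (2 ^ a * A * (1 + ((Nat.ceil (a / 2)).factorial : ℝ) * (4 * t) ^ (a / 2))) *
          Real.exp (-(1 / (4 * t) * r ^ 2)) := by
  have hra : (0:ℝ) ≤ r ^ a := Real.rpow_nonneg hr a
  have hq1 : (0:ℝ) < 1 + q ^ a := by
    have := Real.rpow_nonneg hq a; linarith
  have hs1 : (0:ℝ) < 1 + s ^ a := by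
    have := Real.rpow_nonneg hs a; linarith
  have hpeetre := aux_peetre a r q s ha0.le hr hq hs htri
  have hρy : (1 + q ^ a)⁻¹ ≤ 2 ^ a * (1 + r ^ a) * (1 + s ^ a)⁻¹ := by
    rw [← one_div, ← one_div, mul_one_div, div_le_div_iff₀ hq1 hs1]
    nlinarith
  have hE : Real.exp (-r ^ 2 / (2 * t)) ≤ Real.exp (-r ^ 2 / (4 * t)) := by
    apply Real.exp_le_exp.2
    rw [div_le_div_iff₀ (by linarith) (by linarith)]
    nlinarith [sq_nonneg r]
  have hmom := aux_moment a t r ha0.le ht0 hr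
  have hfval : Real.exp (-(1 / (4 * t) * r ^ 2)) = Real.exp (-r ^ 2 / (4 * t)) := by
    congr 1; field_simp
  have h2a : (0:ℝ) ≤ 2 ^ a := Real.rpow_nonneg (by norm_num) a
  have hsx : (0:ℝ) ≤ (1 + s ^ a)⁻¹ := by positivity
  rw [hfval]
  calc A * Real.exp (-r ^ 2 / (2 * t)) * (1 + q ^ a)⁻¹
      ≤ A * Real.exp (-r ^ 2 / (2 * t)) * (2 ^ a * (1 + r ^ a) * (1 + s ^ a)⁻¹) := by
        apply mul_le_mul_of_nonneg_left hρy
        exact mul_nonneg hA (Real.exp_nonneg _)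
    _ = (2 ^ a * A * (1 + s ^ a)⁻¹) *
          (Real.exp (-r ^ 2 / (2 * t)) + r ^ a * Real.exp (-r ^ 2 / (2 * t))) := by ring
    _ ≤ (2 ^ a * A * (1 + s ^ a)⁻¹) *
          (Real.exp (-r ^ 2 / (4 * t)) + ((Nat.ceil (a / 2)).factorial : ℝ) *
            (4 * t) ^ (a / 2) * Real.exp (-r ^ 2 / (4 * t))) := by
        apply mul_le_mul_of_nonneg_left (by linarith)
        exact mul_nonneg (mul_nonneg h2a hA) hsx
    _ = (1 + s ^ a)⁻¹ *
          (2 ^ a * A * (1 + ((Nat.ceil (a / 2)).factorial : ℝ) * (4 * t) ^ (a / 2))) *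
            Real.exp (-r ^ 2 / (4 * t)) := by ring

theorem poly_weight_admissible (d : ℕ) (hd : 1 ≤ d) (a : ℝ) (ha : (d : ℝ) < a)
    (p : ℝ → EuclideanSpace ℝ (Fin d) → ℝ)
    (hp : ∀ t x, p t x = (2 * Real.pi * t) ^ (-(d : ℝ) / 2) *
      Real.exp (-‖x‖ ^ 2 / (2 * t)))
    (ρ : EuclideanSpace ℝ (Fin d) → ℝ)
    (hρ : ∀ x, ρ x = (1 + ‖x‖ ^ a)⁻¹) :
    (∀ x, 0 < ρ x) ∧ (∃ M : ℝ, ∀ x, ρ x ≤ M) ∧ Continuous ρ ∧ Integrable ρ ∧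
      ∀ T > (0:ℝ), ∃ C : ℝ, ∀ t ∈ Ioc (0:ℝ) T, ∀ x,
        (∫ y, p t (x - y) * ρ y) ≤ C * ρ x := by
  have hd1 : (1:ℝ) ≤ (d:ℝ) := by exact_mod_cast hd
  have ha0 : 0 < a := by linarith
  have hρpos : ∀ x, 0 < ρ x := by
    intro x
    rw [hρ]
    have := Real.rpow_nonneg (norm_nonneg x) a
    positivity
  refine ⟨hρpos, ⟨1, ?_⟩, ?_, ?_, ?_⟩
  · intro x
    rw [hρ]
    have h := Real.rpow_nonneg (norm_nonneg x) a
    exact inv_le_one_of_one_le₀ (by linarith)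
  · have hfun : ρ = fun x => (1 + ‖x‖ ^ a)⁻¹ := funext hρ
    rw [hfun]
    have hc : Continuous fun x : EuclideanSpace ℝ (Fin d) => (1:ℝ) + ‖x‖ ^ a :=
      continuous_const.add (continuous_norm.rpow_const fun x => Or.inr ha0.le)
    refine hc.inv₀ fun x => ?_
    have := Real.rpow_nonneg (norm_nonneg x) a
    positivity
  · -- Integrable
    have hnr : (Module.finrank ℝ (EuclideanSpace ℝ (Fin d)) : ℝ) < a := by
      rw [finrank_euclideanSpace_fin]; exact ha
    have hint : Integrable (fun x : EuclideanSpace ℝ (Fin d) => (2:ℝ) ^ a * (1 + ‖x‖) ^ (-a)) :=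
      (integrable_one_add_norm hnr).const_mul _
    refine hint.mono' ?_ (Eventually.of_forall fun x => ?_)
    · have hfun : ρ = fun x => (1 + ‖x‖ ^ a)⁻¹ := funext hρ
      rw [hfun]
      have hc : Continuous fun x : EuclideanSpace ℝ (Fin d) => (1:ℝ) + ‖x‖ ^ a :=
        continuous_const.add (continuous_norm.rpow_const fun x => Or.inr ha0.le)
      exact (hc.inv₀ fun x => by
        have := Real.rpow_nonneg (norm_nonneg x) a; positivity).aestronglyMeasurable
    · rw [Real.norm_eq_abs, abs_of_pos (hρpos x), hρ]
      have hxa : (0:ℝ) ≤ ‖x‖ ^ a := Real.rpow_nonneg (norm_nonneg x) a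
      have hx1 : (0:ℝ) < 1 + ‖x‖ ^ a := by linarith
      have hb : (1 + ‖x‖) ^ a ≤ 2 ^ a * (1 + ‖x‖ ^ a) := by
        have := aux_sum_rpow a 1 ‖x‖ ha0.le zero_le_one (norm_nonneg x)
        rwa [Real.one_rpow] at this
      have hbpos : (0:ℝ) < (1 + ‖x‖) ^ a :=
        Real.rpow_pos_of_pos (by linarith [norm_nonneg x]) a
      rw [Real.rpow_neg (by linarith [norm_nonneg x])]
      rw [← one_div, ← one_div, mul_one_div, div_le_div_iff₀ hx1 hbpos]
      have h2a : (0:ℝ) < 2 ^ a := Real.rpow_pos_of_pos (by norm_num) a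
      nlinarith
  · -- convolution bound
    intro T hT
    refine ⟨2 ^ a * 2 ^ ((d:ℝ) / 2) *
      (1 + ((Nat.ceil (a / 2)).factorial : ℝ) * (4 * T) ^ (a / 2)), ?_⟩
    rintro t ⟨ht0, htT⟩ x
    have h2pt : (0:ℝ) < 2 * Real.pi * t := by
      have := Real.pi_pos; nlinarith
    have hApos : (0:ℝ) < (2 * Real.pi * t) ^ (-(d:ℝ) / 2) :=
      Real.rpow_pos_of_pos h2pt _
    have hb : (0:ℝ) < 1 / (4 * t) := by positivity
    have hρx : 0 ≤ ρ x := (hρpos x).le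
    have hfint : Integrable (fun v : EuclideanSpace ℝ (Fin d) =>
        Real.exp (-(1 / (4 * t) * ‖v‖ ^ 2))) := by
      have := aux_gauss_integrable d (1 / (4 * t)) hb
      exact this
    have hgint : Integrable (fun y => ρ x *
        ((2 * Real.pi * t) ^ (-(d:ℝ) / 2) * 2 ^ a *
          (1 + ((Nat.ceil (a / 2)).factorial : ℝ) * (4 * t) ^ (a / 2))) *
        Real.exp (-(1 / (4 * t) * ‖x - y‖ ^ 2))) :=
      (hfint.comp_sub_left x).const_mul _
    have hpt : ∀ y, p t (x - y) * ρ y ≤ ρ x *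
        ((2 * Real.pi * t) ^ (-(d:ℝ) / 2) * 2 ^ a *
          (1 + ((Nat.ceil (a / 2)).factorial : ℝ) * (4 * t) ^ (a / 2))) *
        Real.exp (-(1 / (4 * t) * ‖x - y‖ ^ 2)) := by
      intro y
      rw [hp, hρ y, hρ x]
      have htri : ‖x‖ ≤ ‖x - y‖ + ‖y‖ := by
        calc ‖x‖ = ‖x - y + y‖ := by rw [sub_add_cancel]
          _ ≤ ‖x - y‖ + ‖y‖ := norm_add_le _ _
      have h := aux_ptwise a t ((2 * Real.pi * t) ^ (-(d:ℝ) / 2)) ‖x - y‖ ‖y‖ ‖x‖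
        ha0 ht0 hApos.le (norm_nonneg _) (norm_nonneg _) (norm_nonneg _) htri
      calc (2 * Real.pi * t) ^ (-(d:ℝ) / 2) * Real.exp (-‖x - y‖ ^ 2 / (2 * t)) *
            (1 + ‖y‖ ^ a)⁻¹
          ≤ (1 + ‖x‖ ^ a)⁻¹ *
              (2 ^ a * (2 * Real.pi * t) ^ (-(d:ℝ) / 2) *
                (1 + ((Nat.ceil (a / 2)).factorial : ℝ) * (4 * t) ^ (a / 2))) *
              Real.exp (-(1 / (4 * t) * ‖x - y‖ ^ 2)) := h
        _ = (1 + ‖x‖ ^ a)⁻¹ *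
              ((2 * Real.pi * t) ^ (-(d:ℝ) / 2) * 2 ^ a *
                (1 + ((Nat.ceil (a / 2)).factorial : ℝ) * (4 * t) ^ (a / 2))) *
              Real.exp (-(1 / (4 * t) * ‖x - y‖ ^ 2)) := by ring
    have hnonneg : ∀ y, 0 ≤ p t (x - y) * ρ y := by
      intro y
      apply mul_nonneg _ (hρpos y).le
      rw [hp]
      exact mul_nonneg (Real.rpow_nonneg h2pt.le _) (Real.exp_nonneg _)
    have hmono := integral_mono_of_nonneg (Eventually.of_forall hnonneg) hgint
      (Eventually.of_forall hpt)
    have hint_eq : (∫ y : EuclideanSpace ℝ (Fin d),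
        Real.exp (-(1 / (4 * t) * ‖x - y‖ ^ 2))) =
        (Real.pi / (1 / (4 * t))) ^ ((d:ℝ) / 2) := by
      have h1 := integral_sub_left_eq_self
        (fun v : EuclideanSpace ℝ (Fin d) => Real.exp (-(1 / (4 * t) * ‖v‖ ^ 2))) volume x
      have h2 : (∫ v : EuclideanSpace ℝ (Fin d), Real.exp (-(1 / (4 * t) * ‖v‖ ^ 2))) =
          (Real.pi / (1 / (4 * t))) ^ ((d:ℝ) / 2) := by
        have h3 := GaussianFourier.integral_rexp_neg_mul_sq_norm
          (V := EuclideanSpace ℝ (Fin d)) hb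
        rw [finrank_euclideanSpace_fin] at h3
        rw [← h3]
        congr 1 with v
        ring_nf
      exact h1.trans h2
    have hval : (∫ y, ρ x *
        ((2 * Real.pi * t) ^ (-(d:ℝ) / 2) * 2 ^ a *
          (1 + ((Nat.ceil (a / 2)).factorial : ℝ) * (4 * t) ^ (a / 2))) *
        Real.exp (-(1 / (4 * t) * ‖x - y‖ ^ 2))) =
        ρ x * ((2 * Real.pi * t) ^ (-(d:ℝ) / 2) * 2 ^ a *
          (1 + ((Nat.ceil (a / 2)).factorial : ℝ) * (4 * t) ^ (a / 2))) *
          (Real.pi / (1 / (4 * t))) ^ ((d:ℝ) / 2) := by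
      rw [integral_const_mul, hint_eq]
    -- final estimate
    have hsimp : (Real.pi / (1 / (4 * t))) ^ ((d:ℝ) / 2) =
        2 ^ ((d:ℝ) / 2) * (2 * Real.pi * t) ^ ((d:ℝ) / 2) := by
      rw [← Real.mul_rpow (by norm_num) h2pt.le]
      congr 1
      field_simp
      ring
    have hcancel : (2 * Real.pi * t) ^ (-(d:ℝ) / 2) * (2 * Real.pi * t) ^ ((d:ℝ) / 2) = 1 := by
      rw [← Real.rpow_add h2pt, neg_div, neg_add_cancel, Real.rpow_zero]
    have hmono2 : (4 * t) ^ (a / 2) ≤ (4 * T) ^ (a / 2) :=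
      Real.rpow_le_rpow (by linarith) (by linarith) (by linarith)
    have h2a : (0:ℝ) ≤ 2 ^ a := Real.rpow_nonneg (by norm_num) a
    have h2d : (0:ℝ) ≤ 2 ^ ((d:ℝ) / 2) := Real.rpow_nonneg (by norm_num) _
    have hn0 : (0:ℝ) ≤ ((Nat.ceil (a / 2)).factorial : ℝ) := by positivity
    calc (∫ y, p t (x - y) * ρ y)
        ≤ ρ x * ((2 * Real.pi * t) ^ (-(d:ℝ) / 2) * 2 ^ a *
            (1 + ((Nat.ceil (a / 2)).factorial : ℝ) * (4 * t) ^ (a / 2))) *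
            (Real.pi / (1 / (4 * t))) ^ ((d:ℝ) / 2) := by rw [← hval]; exact hmono
      _ = ρ x * (2 ^ a * (1 + ((Nat.ceil (a / 2)).factorial : ℝ) * (4 * t) ^ (a / 2)) *
            2 ^ ((d:ℝ) / 2)) *
            ((2 * Real.pi * t) ^ (-(d:ℝ) / 2) * (2 * Real.pi * t) ^ ((d:ℝ) / 2)) := by
          rw [hsimp]; ring
      _ = ρ x * (2 ^ a * (1 + ((Nat.ceil (a / 2)).factorial : ℝ) * (4 * t) ^ (a / 2)) *
            2 ^ ((d:ℝ) / 2)) := by rw [hcancel, mul_one]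
      _ ≤ ρ x * (2 ^ a * (1 + ((Nat.ceil (a / 2)).factorial : ℝ) * (4 * T) ^ (a / 2)) *
            2 ^ ((d:ℝ) / 2)) := by
          apply mul_le_mul_of_nonneg_left _ hρx
          apply mul_le_mul_of_nonneg_right _ h2d
          apply mul_le_mul_of_nonneg_left _ h2a
          nlinarith
      _ = 2 ^ a * 2 ^ ((d:ℝ) / 2) *
            (1 + ((Nat.ceil (a / 2)).factorial : ℝ) * (4 * T) ^ (a / 2)) * ρ x := by ring
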